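/- Let (X,d,μ) be a space of homogeneous type, let p(·), q(·) ∈ 𝒫₁(X) ∩ LH satisfy 1/p(x) − 1/q(x) ≡ η for a constant η ∈ [0,1), let q_∞ be the LH_∞ limit value of q(·), let ω ∈ A_{p(·),q(·)}(X), and set W(x) = ω(x)^{q(x)}. Then there exist constants c, C > 0 such that for every ball B ⊆ X with ‖ω χ_B‖_{q(·)} ≥ 1 one has c·W(B)^{1/q_∞} ≤ ‖ω χ_B‖_{q(·)} ≤ C·W(B)^{1/q_∞}. -/

import Mathlib

open MeasureTheory ENNReal Set Filter Topology

noncomputable section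

variable {X : Type*}

/-- `d` is a quasi-metric on `X` with quasi-triangle constant `A0`. -/
def IsQuasiMetric (d : X → X → ℝ) (A0 : ℝ) : Prop :=
  1 ≤ A0 ∧ (∀ x y, 0 ≤ d x y) ∧ (∀ x y, d x y = 0 ↔ x = y) ∧
    (∀ x y, d x y = d y x) ∧ ∀ x y z, d x y ≤ A0 * (d x z + d z y)

/-- The quasi-metric ball `B(c,r)`. -/
def qball (d : X → X → ℝ) (c : X) (r : ℝ) : Set X := {y | d c y < r}

/-- The measure `μ` is doubling (with constant `Cμ`) on quasi-metric balls:
`0 < μ(B(x,2r)) ≤ Cμ·μ(B(x,r)) < ∞`. -/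
def IsDoubling [MeasurableSpace X] (d : X → X → ℝ) (μ : Measure X) (Cμ : ℝ≥0∞) : Prop :=
  1 ≤ Cμ ∧ ∀ (x : X) (r : ℝ), 0 < r →
    0 < μ (qball d x (2 * r)) ∧ μ (qball d x (2 * r)) ≤ Cμ * μ (qball d x r) ∧
      Cμ * μ (qball d x r) < ∞

/-- The Luxemburg norm `‖f‖_{p(·)}` for a variable (possibly infinite) exponent `p`. -/
def luxNorm [MeasurableSpace X] (μ : Measure X) (p : X → ℝ≥0∞) (f : X → ℝ≥0∞) : ℝ≥0∞ :=
  sInf {lam : ℝ≥0∞ | 0 < lam ∧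
    (∫⁻ x in {x | p x ≠ ∞}, (f x / lam) ^ (p x).toReal ∂μ) +
      essSup (fun x => f x / lam) (μ.restrict {x | p x = ∞}) ≤ 1}

/-- The class `𝒫₁(X)`: exponents with values in `[1,∞)` and `p₊ < ∞`. -/
def MemP1 [MeasurableSpace X] (μ : Measure X) (p : X → ℝ≥0∞) : Prop :=
  Measurable p ∧ (∀ x, 1 ≤ p x) ∧ (∀ x, p x ≠ ∞) ∧ essSup p μ < ∞

/-- The class `𝒫(X)`: additionally `1 < p₋`. -/
def MemP [MeasurableSpace X] (μ : Measure X) (p : X → ℝ≥0∞) : Prop :=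
  MemP1 μ p ∧ 1 < essInf p μ

/-- Local log-Hölder continuity `LH₀`. -/
def MemLH0 (d : X → X → ℝ) (p : X → ℝ≥0∞) : Prop :=
  ∃ C0 : ℝ, 0 ≤ C0 ∧ ∀ x y, d x y < 1 / 2 →
    |(p x).toReal - (p y).toReal| ≤ C0 / Real.log (Real.exp 1 + 1 / d x y)

/-- Log-Hölder decay at infinity `LH_∞` with base point `x0` and limit value `pinf`. -/
def MemLHinf (d : X → X → ℝ) (x0 : X) (pinf : ℝ) (p : X → ℝ≥0∞) : Prop :=
  ∃ Cinf : ℝ, 0 ≤ Cinf ∧ ∀ x, |(p x).toReal - pinf| ≤ Cinf / Real.log (Real.exp 1 + d x x0)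

/-- Global log-Hölder continuity `LH = LH₀ ∩ LH_∞`. -/
def MemLH (d : X → X → ℝ) (p : X → ℝ≥0∞) : Prop :=
  MemLH0 d p ∧ ∃ x0 pinf, MemLHinf d x0 pinf p

/-- `w` is a weight: measurable, positive and finite a.e., and locally integrable. -/
def IsWeight [MeasurableSpace X] (d : X → X → ℝ) (μ : Measure X) (w : X → ℝ≥0∞) : Prop :=
  Measurable w ∧ (∀ᵐ x ∂μ, 0 < w x ∧ w x < ∞) ∧
    ∀ (c : X) (r : ℝ), 0 < r → ∫⁻ x in qball d c r, w x ∂μ < ∞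

/-- The pointwise conjugate exponent `p′(·)`, `1/p(x) + 1/p′(x) = 1`. -/
def conjExp (p : X → ℝ≥0∞) : X → ℝ≥0∞ := fun x => if p x = ∞ then 1 else p x / (p x - 1)

/-- The `A_{p(·),q(·)}` characteristic constant
`sup_B μ(B)^{η−1} ‖w χ_B‖_{q(·)} ‖w⁻¹ χ_B‖_{p′(·)}`. -/
def ApqConst [MeasurableSpace X] (d : X → X → ℝ) (μ : Measure X) (η : ℝ)
    (p q : X → ℝ≥0∞) (w : X → ℝ≥0∞) : ℝ≥0∞ :=
  ⨆ (c : X) (r : ℝ) (_ : 0 < r),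
    μ (qball d c r) ^ (η - 1) * luxNorm μ q ((qball d c r).indicator w) *
      luxNorm μ (conjExp p) ((qball d c r).indicator fun x => (w x)⁻¹)

/-- The fractional maximal operator `M_η`. -/
def fracMax [MeasurableSpace X] (d : X → X → ℝ) (μ : Measure X) (η : ℝ)
    (f : X → ℝ≥0∞) (x : X) : ℝ≥0∞ :=
  ⨆ (c : X) (r : ℝ) (_ : 0 < r) (_ : x ∈ qball d c r),
    μ (qball d c r) ^ (η - 1) * ∫⁻ y in qball d c r, f y ∂μ

/-- The Muckenhoupt `A₁` condition: `Mw ≤ C w` a.e. -/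
def MemA1 [MeasurableSpace X] (d : X → X → ℝ) (μ : Measure X) (w : X → ℝ≥0∞) : Prop :=
  ∃ C : ℝ≥0∞, C ≠ ∞ ∧ ∀ᵐ x ∂μ, fracMax d μ 0 w x ≤ C * w x

/-- The Muckenhoupt `A_p` condition for `1 < p < ∞`. -/
def MemAp [MeasurableSpace X] (d : X → X → ℝ) (μ : Measure X) (p : ℝ)
    (w : X → ℝ≥0∞) : Prop :=
  (⨆ (c : X) (r : ℝ) (_ : 0 < r),
    ((μ (qball d c r))⁻¹ * ∫⁻ x in qball d c r, w x ∂μ) *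
      ((μ (qball d c r))⁻¹ * ∫⁻ x in qball d c r, w x ^ (-(1 / (p - 1))) ∂μ) ^ (p - 1)) ≠ ∞

/-- The class `A_∞ = ⋃_{p ≥ 1} A_p`. -/
def MemAinfty [MeasurableSpace X] (d : X → X → ℝ) (μ : Measure X) (w : X → ℝ≥0∞) : Prop :=
  MemA1 d μ w ∨ ∃ p : ℝ, 1 < p ∧ MemAp d μ p w


namespace S9

lemma one_le_toReal {a : ℝ≥0∞} (h1 : 1 ≤ a) (h2 : a ≠ ∞) : 1 ≤ a.toReal := by
  simpa using ENNReal.toReal_mono h2 h1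

lemma rpow_pos_fin {a : ℝ≥0∞} (h0 : a ≠ 0) (ht : a ≠ ∞) (s : ℝ) : a ^ s ≠ 0 ∧ a ^ s ≠ ∞ := by
  constructor
  · simp [ENNReal.rpow_eq_zero_iff, h0, ht]
  · simp [ENNReal.rpow_eq_top_iff, h0, ht]

lemma rpow_le_rpow_left_of_nonpos {x y : ℝ≥0∞} {z : ℝ} (hz : z ≤ 0) (hxy : x ≤ y) :
    y ^ z ≤ x ^ z := by
  have h2 : (y ^ (-z))⁻¹ ≤ (x ^ (-z))⁻¹ :=
    ENNReal.inv_le_inv.mpr (ENNReal.rpow_le_rpow hxy (neg_nonneg.mpr hz))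
  simpa [← ENNReal.rpow_neg, neg_neg] using h2

lemma luxNorm_mono [MeasurableSpace X] (μ : Measure X) (e : X → ℝ≥0∞) {f g : X → ℝ≥0∞}
    (h : ∀ x, f x ≤ g x) : luxNorm μ e f ≤ luxNorm μ e g := by
  apply sInf_le_sInf
  rintro lam ⟨hl0, hle⟩
  refine ⟨hl0, le_trans (add_le_add ?_ ?_) hle⟩
  · exact lintegral_mono fun x =>
      ENNReal.rpow_le_rpow (ENNReal.div_le_div_right (h x) _) ENNReal.toReal_nonneg
  · exact essSup_mono_ae (Filter.Eventually.of_forall fun x => ENNReal.div_le_div_right (h x) _)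

lemma luxNorm_indicator_eq [MeasurableSpace X] (μ : Measure X) (q ω : X → ℝ≥0∞) {B : Set X}
    (hB : MeasurableSet B) (hq : ∀ x, q x ≠ ∞) (htq : ∀ x, 0 < (q x).toReal) :
    luxNorm μ q (B.indicator ω)
      = sInf {lam : ℝ≥0∞ | 0 < lam ∧ ∫⁻ x in B, (ω x / lam) ^ (q x).toReal ∂μ ≤ 1} := by
  have h1 : {x | q x = ∞} = (∅ : Set X) := by ext x; simp [hq x]
  have h2 : {x | q x ≠ ∞} = (univ : Set X) := by ext x; simp [hq x]
  have key : ∀ lam : ℝ≥0∞,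
      (∫⁻ x in {x | q x ≠ ∞}, (B.indicator ω x / lam) ^ (q x).toReal ∂μ) +
        essSup (fun x => B.indicator ω x / lam) (μ.restrict {x | q x = ∞})
      = ∫⁻ x in B, (ω x / lam) ^ (q x).toReal ∂μ := by
    intro lam
    have h3 : ∀ x, (B.indicator ω x / lam) ^ (q x).toReal
        = B.indicator (fun y => (ω y / lam) ^ (q y).toReal) x := by
      intro x
      by_cases hx : x ∈ B
      · simp [Set.indicator_of_mem hx]
      · simp [Set.indicator_of_notMem hx, ENNReal.zero_div,
          ENNReal.zero_rpow_of_pos (htq x)]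
    rw [h1, h2, Measure.restrict_empty, essSup_measure_zero, Measure.restrict_univ,
      _root_.bot_eq_zero, add_zero, lintegral_congr h3, lintegral_indicator hB]
  unfold luxNorm
  congr 1
  ext lam
  simp only [Set.mem_setOf_eq, key lam]

lemma mod_le_one_of_norm_lt [MeasurableSpace X] (μ : Measure X) (q ω : X → ℝ≥0∞) {B : Set X}
    (hB : MeasurableSet B) (hq : ∀ x, q x ≠ ∞) (htq : ∀ x, 0 < (q x).toReal)
    {lam : ℝ≥0∞} (h : luxNorm μ q (B.indicator ω) < lam) :
    ∫⁻ x in B, (ω x / lam) ^ (q x).toReal ∂μ ≤ 1 := by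
  rw [luxNorm_indicator_eq μ q ω hB hq htq] at h
  obtain ⟨b, ⟨hb0, hb1⟩, hblt⟩ := sInf_lt_iff.mp h
  refine le_trans (lintegral_mono fun x => ?_) hb1
  exact ENNReal.rpow_le_rpow (ENNReal.div_le_div_left hblt.le _) ENNReal.toReal_nonneg

lemma norm_le_of_mod [MeasurableSpace X] (μ : Measure X) (q ω : X → ℝ≥0∞) {B : Set X}
    (hB : MeasurableSet B) (hq : ∀ x, q x ≠ ∞) (htq : ∀ x, 0 < (q x).toReal)
    {lam : ℝ≥0∞} (h0 : 0 < lam) (h : ∫⁻ x in B, (ω x / lam) ^ (q x).toReal ∂μ ≤ 1) :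
    luxNorm μ q (B.indicator ω) ≤ lam := by
  rw [luxNorm_indicator_eq μ q ω hB hq htq]
  exact sInf_le ⟨h0, h⟩

lemma setLIntegral_mono_on' [MeasurableSpace X] {μ : Measure X} {s : Set X}
    (hs : MeasurableSet s) {f g : X → ℝ≥0∞} (h : ∀ x ∈ s, f x ≤ g x) :
    ∫⁻ x in s, f x ∂μ ≤ ∫⁻ x in s, g x ∂μ :=
  lintegral_mono_ae ((ae_restrict_iff' hs).2 (Filter.Eventually.of_forall h))

lemma W_ge_one [MeasurableSpace X] (μ : Measure X) (q ω : X → ℝ≥0∞) {B : Set X}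
    (hB : MeasurableSet B) (hq : ∀ x, q x ≠ ∞) (htq : ∀ x, 0 < (q x).toReal)
    {Q : ℝ} (hQ1 : 1 ≤ Q) (hQae : ∀ᵐ x ∂μ, (q x).toReal ≤ Q)
    (hN : 1 ≤ luxNorm μ q (B.indicator ω)) :
    1 ≤ ∫⁻ x in B, ω x ^ (q x).toReal ∂μ := by
  set W := ∫⁻ x in B, ω x ^ (q x).toReal ∂μ with hW
  by_contra hcon
  push_neg at hcon
  obtain ⟨c, hWc, hc1⟩ := exists_between hcon
  have hc0 : c ≠ 0 := fun h => (not_lt_of_ge (zero_le : 0 ≤ W)) (h ▸ hWc)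
  have hcT : c ≠ ∞ := (hc1.trans_le le_top).ne
  have hQ0 : (0:ℝ) < Q := by linarith
  set lam := c ^ (1/Q) with hlam
  have hlam0 : lam ≠ 0 := (rpow_pos_fin hc0 hcT _).1
  have hlamT : lam ≠ ∞ := (rpow_pos_fin hc0 hcT _).2
  have hlam1 : lam < 1 := ENNReal.rpow_lt_one hc1 (by positivity)
  have hnotin : ¬ (0 < lam ∧ ∫⁻ x in B, (ω x / lam) ^ (q x).toReal ∂μ ≤ 1) := by
    intro hmem
    have h2 : luxNorm μ q (B.indicator ω) ≤ lam := by
      rw [luxNorm_indicator_eq μ q ω hB hq htq]; exact sInf_le hmem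
    exact absurd (le_trans hN h2) (not_le.mpr hlam1)
  have hmodgt : 1 < ∫⁻ x in B, (ω x / lam) ^ (q x).toReal ∂μ := by
    by_contra hh
    push_neg at hh
    exact hnotin ⟨pos_iff_ne_zero.mpr hlam0, hh⟩
  have hptwise : ∀ᵐ x ∂(μ.restrict B),
      (ω x / lam) ^ (q x).toReal ≤ (lam ^ Q)⁻¹ * ω x ^ (q x).toReal := by
    filter_upwards [ae_restrict_of_ae hQae] with x hxQ
    calc (ω x / lam) ^ (q x).toReal
        = ω x ^ (q x).toReal / lam ^ (q x).toReal :=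
          ENNReal.div_rpow_of_nonneg _ _ ENNReal.toReal_nonneg
      _ ≤ ω x ^ (q x).toReal / lam ^ Q :=
          ENNReal.div_le_div_left (ENNReal.rpow_le_rpow_of_exponent_ge hlam1.le hxQ) _
      _ = (lam ^ Q)⁻¹ * ω x ^ (q x).toReal := by rw [div_eq_mul_inv, mul_comm]
  have hinvT : (lam ^ Q)⁻¹ ≠ ∞ := ENNReal.inv_ne_top.mpr (rpow_pos_fin hlam0 hlamT Q).1
  have hmodle : ∫⁻ x in B, (ω x / lam) ^ (q x).toReal ∂μ ≤ (lam ^ Q)⁻¹ * W := by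
    refine le_trans (lintegral_mono_ae hptwise) ?_
    rw [lintegral_const_mul' _ _ hinvT]
  have hlamQ : lam ^ Q = c := by
    rw [hlam, ← ENNReal.rpow_mul, one_div, inv_mul_cancel₀ (by linarith : Q ≠ 0),
      ENNReal.rpow_one]
  rw [hlamQ] at hmodle
  have hlt : 1 < c⁻¹ * W := lt_of_lt_of_le hmodgt hmodle
  have hcW : c < W := by
    have h2 := (ENNReal.mul_lt_mul_iff_right hc0 hcT).mpr hlt
    rw [mul_one] at h2
    calc c < c * (c⁻¹ * W) := h2
      _ = (c * c⁻¹) * W := by ring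
      _ = W := by rw [ENNReal.mul_inv_cancel hc0 hcT, one_mul]
  exact absurd hWc (not_lt.mpr hcW.le)

lemma W_le_rpow [MeasurableSpace X] (μ : Measure X) (q ω : X → ℝ≥0∞) {B : Set X}
    {Q : ℝ} (hQ0 : 0 ≤ Q) (hQae : ∀ᵐ x ∂μ, (q x).toReal ≤ Q)
    {lam : ℝ≥0∞} (hlam1 : 1 ≤ lam) (hlamT : lam ≠ ∞)
    (hmod : ∫⁻ x in B, (ω x / lam) ^ (q x).toReal ∂μ ≤ 1) :
    ∫⁻ x in B, ω x ^ (q x).toReal ∂μ ≤ lam ^ Q := by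
  have hlam0 : lam ≠ 0 := fun h => by simp [h] at hlam1
  have hptwise : ∀ᵐ x ∂(μ.restrict B),
      ω x ^ (q x).toReal ≤ lam ^ Q * (ω x / lam) ^ (q x).toReal := by
    filter_upwards [ae_restrict_of_ae hQae] with x hxQ
    calc ω x ^ (q x).toReal = (ω x / lam * lam) ^ (q x).toReal := by
          rw [ENNReal.div_mul_cancel hlam0 hlamT]
      _ = (ω x / lam) ^ (q x).toReal * lam ^ (q x).toReal :=
          ENNReal.mul_rpow_of_nonneg _ _ ENNReal.toReal_nonneg
      _ ≤ (ω x / lam) ^ (q x).toReal * lam ^ Q :=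
          mul_le_mul_right (ENNReal.rpow_le_rpow_of_exponent_le hlam1 hxQ) _
      _ = lam ^ Q * (ω x / lam) ^ (q x).toReal := mul_comm _ _
  calc ∫⁻ x in B, ω x ^ (q x).toReal ∂μ
      ≤ ∫⁻ x in B, lam ^ Q * (ω x / lam) ^ (q x).toReal ∂μ := lintegral_mono_ae hptwise
    _ = lam ^ Q * ∫⁻ x in B, (ω x / lam) ^ (q x).toReal ∂μ :=
        lintegral_const_mul' _ _ (ENNReal.rpow_ne_top_of_nonneg hQ0 hlamT)
    _ ≤ lam ^ Q * 1 := by gcongr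
    _ = lam ^ Q := mul_one _

lemma W_le_of_norm_ne_top [MeasurableSpace X] (μ : Measure X) (q ω : X → ℝ≥0∞) {B : Set X}
    (hB : MeasurableSet B) (hq : ∀ x, q x ≠ ∞) (htq : ∀ x, 0 < (q x).toReal)
    {Q : ℝ} (hQ0 : 0 ≤ Q) (hQae : ∀ᵐ x ∂μ, (q x).toReal ≤ Q)
    (hNT : luxNorm μ q (B.indicator ω) ≠ ∞) :
    ∫⁻ x in B, ω x ^ (q x).toReal ∂μ ≤ (2 * max (luxNorm μ q (B.indicator ω)) 1) ^ Q := by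
  set N := luxNorm μ q (B.indicator ω) with hN
  have hmaxT : max N 1 ≠ ∞ := by
    simp only [ne_eq, max_eq_top, not_or]
    exact ⟨hNT, by simp⟩
  have hmax0 : max N 1 ≠ 0 := (lt_of_lt_of_le one_pos (le_max_right N 1)).ne'
  have hlam1 : (1:ℝ≥0∞) ≤ 2 * max N 1 := by
    calc (1:ℝ≥0∞) ≤ max N 1 := le_max_right _ _
      _ ≤ 2 * max N 1 := le_mul_of_one_le_left zero_le (by norm_num)
  have hlamT : (2 : ℝ≥0∞) * max N 1 ≠ ∞ := ENNReal.mul_ne_top (by norm_num) hmaxT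
  have hlt : N < 2 * max N 1 := by
    calc N ≤ max N 1 := le_max_left _ _
      _ < max N 1 + max N 1 := ENNReal.lt_add_right hmaxT hmax0
      _ = 2 * max N 1 := (two_mul _).symm
  exact W_le_rpow μ q ω hQ0 hQae hlam1 hlamT
    (mod_le_one_of_norm_lt μ q ω hB hq htq hlt)

lemma luxNorm_indicator_pos [MeasurableSpace X] (μ : Measure X) (e : X → ℝ≥0∞)
    (he : Measurable e) (he1 : ∀ x, 1 ≤ e x) {B : Set X} (hB : MeasurableSet B)
    (hB0 : μ B ≠ 0) (hBT : μ B ≠ ∞) (g : X → ℝ≥0∞) (hg : Measurable g)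
    (hgpos : ∀ᵐ x ∂μ, 0 < g x) :
    0 < luxNorm μ e (B.indicator g) := by
  -- find a set E ⊆ B of positive finite measure where g ≥ a > 0
  have hnull : μ {x | ¬ 0 < g x} = 0 := by
    have := hgpos
    rwa [ae_iff] at this
  have hBpos : μ (B ∩ {x | 0 < g x}) ≠ 0 := by
    intro h0
    apply hB0
    have hsub : B ⊆ (B ∩ {x | 0 < g x}) ∪ {x | ¬ 0 < g x} := by
      intro x hx
      by_cases hgx : 0 < g x
      · exact Or.inl ⟨hx, hgx⟩
      · exact Or.inr hgx
    have hle := (measure_mono hsub).trans (measure_union_le (μ := μ) _ _)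
    rw [h0, hnull, add_zero] at hle
    exact le_zero_iff.mp hle
  have hcover : B ∩ {x | 0 < g x} ⊆ ⋃ n : ℕ, B ∩ {x | ((n : ℝ≥0∞) + 1)⁻¹ ≤ g x} := by
    rintro x ⟨hxB, hx⟩
    obtain ⟨n, hn⟩ := ENNReal.exists_inv_nat_lt (ne_of_gt hx)
    refine Set.mem_iUnion.mpr ⟨n, hxB, ?_⟩
    refine le_trans (le_trans ?_ hn.le) le_rfl
    exact ENNReal.inv_le_inv.mpr (le_self_add)
  have hex : ∃ n : ℕ, μ (B ∩ {x | ((n : ℝ≥0∞) + 1)⁻¹ ≤ g x}) ≠ 0 := by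
    by_contra hall
    push_neg at hall
    have h2 := measure_mono (μ := μ) hcover
    rw [measure_iUnion_null hall] at h2
    exact hBpos (le_zero_iff.mp h2)
  obtain ⟨n, hE0⟩ := hex
  set a : ℝ≥0∞ := ((n : ℝ≥0∞) + 1)⁻¹ with ha
  have ha0 : a ≠ 0 := by
    rw [ha]
    exact ENNReal.inv_ne_zero.mpr (by simp)
  have haT : a ≠ ∞ := by
    rw [ha]
    exact ENNReal.inv_ne_top.mpr (by simp)
  set E := B ∩ {x | a ≤ g x} with hEdef
  have hEm : MeasurableSet E := hB.inter (hg measurableSet_Ici)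
  have hET : μ E ≠ ∞ :=
    ne_top_of_le_ne_top hBT (measure_mono Set.inter_subset_left)
  set Ef := E ∩ {x | e x ≠ ∞} with hEf
  set Ei := E ∩ {x | e x = ∞} with hEi
  have hEim : MeasurableSet Ei := hEm.inter (he (measurableSet_singleton ∞))
  have hsplit : μ Ef ≠ 0 ∨ μ Ei ≠ 0 := by
    by_contra hc
    push_neg at hc
    have h3 : μ E ≤ μ Ef + μ Ei := by
      refine (measure_mono ?_).trans (measure_union_le (μ := μ) _ _)
      intro x hx
      by_cases hxe : e x = ∞
      · exact Or.inr ⟨hx, hxe⟩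
      · exact Or.inl ⟨hx, hxe⟩
    rw [hc.1, hc.2, add_zero] at h3
    exact hE0 (le_zero_iff.mp h3)
  rcases hsplit with hEf0 | hEi0
  · -- finite exponent part
    have hEfT : μ Ef ≠ ∞ :=
      ne_top_of_le_ne_top hET (measure_mono Set.inter_subset_left)
    have hbpos : 0 < min a (a * μ Ef) :=
      lt_min (pos_iff_ne_zero.mpr ha0) (ENNReal.mul_pos ha0 hEf0)
    refine lt_of_lt_of_le hbpos (le_sInf ?_)
    rintro lam ⟨hlam0, hsum⟩
    by_cases hcase : a ≤ lam
    · exact le_trans (min_le_left _ _) hcase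
    push_neg at hcase
    have hlamT : lam ≠ ∞ := (hcase.trans_le le_top).ne
    refine le_trans (min_le_right _ _) ?_
    have hI : ∫⁻ x in {x | e x ≠ ∞}, (B.indicator g x / lam) ^ (e x).toReal ∂μ ≤ 1 :=
      le_trans le_self_add hsum
    have hge : 1 ≤ a / lam := by
      rw [ENNReal.le_div_iff_mul_le (Or.inl (ne_of_gt hlam0)) (Or.inr haT), one_mul]
      exact hcase.le
    have hIlow : (a / lam) * μ Ef
        ≤ ∫⁻ x in {x | e x ≠ ∞}, (B.indicator g x / lam) ^ (e x).toReal ∂μ := by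
      calc (a / lam) * μ Ef = ∫⁻ _ in Ef, (a / lam) ∂μ := (setLIntegral_const _ _).symm
        _ ≤ ∫⁻ x in Ef, (B.indicator g x / lam) ^ (e x).toReal ∂μ := by
            refine setLIntegral_mono_on' (hEm.inter (he (measurableSet_singleton ∞)).compl) ?_
            rintro x ⟨⟨hxB, hxa⟩, hxe⟩
            have het : 1 ≤ (e x).toReal := one_le_toReal (he1 x) hxe
            have h4 : a / lam ≤ B.indicator g x / lam :=
              ENNReal.div_le_div_right (by rwa [Set.indicator_of_mem hxB]) _
            calc a / lam = (a / lam) ^ (1:ℝ) := (ENNReal.rpow_one _).symm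
              _ ≤ (B.indicator g x / lam) ^ (1:ℝ) :=
                  ENNReal.rpow_le_rpow h4 (by norm_num)
              _ ≤ (B.indicator g x / lam) ^ (e x).toReal :=
                  ENNReal.rpow_le_rpow_of_exponent_le (le_trans hge h4) het
        _ ≤ _ := lintegral_mono_set (fun x hx => hx.2)
    have h5 : (a / lam) * μ Ef ≤ 1 := le_trans hIlow hI
    have h6 := mul_le_mul_left h5 lam
    rw [one_mul] at h6
    have h7 : a / lam * μ Ef * lam = a * μ Ef := by
      rw [div_eq_mul_inv]
      calc a * lam⁻¹ * μ Ef * lam = a * μ Ef * (lam⁻¹ * lam) := by ring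
        _ = a * μ Ef := by
            rw [ENNReal.inv_mul_cancel (ne_of_gt hlam0) hlamT, mul_one]
    exact h7 ▸ h6
  · -- infinite exponent part
    refine lt_of_lt_of_le (pos_iff_ne_zero.mpr ha0) (le_sInf ?_)
    rintro lam ⟨hlam0, hsum⟩
    by_contra hcase
    push_neg at hcase
    have hlamT : lam ≠ ∞ := (hcase.trans_le le_top).ne
    have hES : essSup (fun x => B.indicator g x / lam) (μ.restrict {x | e x = ∞}) ≤ 1 :=
      le_trans le_add_self hsum
    have hae : ∀ᵐ x ∂(μ.restrict {x | e x = ∞}), B.indicator g x / lam ≤ 1 :=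
      (ENNReal.ae_le_essSup _).mono fun x hx => le_trans hx hES
    have hbad : Ei ⊆ {x | ¬ (B.indicator g x / lam ≤ 1)} := by
      rintro x ⟨⟨hxB, hxa⟩, _⟩
      intro hle
      have h7 : B.indicator g x ≤ lam := by
        have := mul_le_mul_left hle lam
        rwa [ENNReal.div_mul_cancel (ne_of_gt hlam0) hlamT, one_mul] at this
      rw [Set.indicator_of_mem hxB] at h7
      exact absurd (le_trans hxa h7) (not_le.mpr hcase)
    have h8 : (μ.restrict {x | e x = ∞}) Ei = 0 := by
      refine measure_mono_null hbad ?_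
      rwa [ae_iff] at hae
    rw [Measure.restrict_apply hEim] at h8
    rw [Set.inter_eq_self_of_subset_left (fun x hx => hx.2)] at h8
    exact hEi0 h8

end S9

set_option maxHeartbeats 3000000

/-- If `ω ∈ A_{p(·),q(·)}` and `‖ωχ_B‖_{q(·)} ≥ 1`, then
`‖ωχ_B‖_{q(·)} ≈ W(B)^{1/q_∞}` with `W = ω^{q(·)}`. -/
theorem statement9 {X : Type*} [MeasurableSpace X]
    (d : X → X → ℝ) (A0 : ℝ) (μ : Measure X) (Cμ : ℝ≥0∞)
    (hd : IsQuasiMetric d A0)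
    (hball : ∀ (c : X) (r : ℝ), MeasurableSet (qball d c r))
    (hdbl : IsDoubling d μ Cμ)
    (η : ℝ) (hη0 : 0 ≤ η) (hη1 : η < 1)
    (p q : X → ℝ≥0∞) (hp : MemP1 μ p) (hq : MemP1 μ q)
    (hpLH : MemLH d p) (hqLH0 : MemLH0 d q)
    (x0 : X) (qinf : ℝ) (hqinf : MemLHinf d x0 qinf q)
    (hpq : ∀ x, (p x)⁻¹ = (q x)⁻¹ + ENNReal.ofReal η)
    (ω : X → ℝ≥0∞) (hω : IsWeight d μ ω)
    (hA : ApqConst d μ η p q ω ≠ ∞) :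
    ∃ cc CC : ℝ≥0∞, 0 < cc ∧ CC ≠ ∞ ∧ ∀ (c : X) (r : ℝ), 0 < r →
      1 ≤ luxNorm μ q ((qball d c r).indicator ω) →
        cc * (∫⁻ x in qball d c r, ω x ^ (q x).toReal ∂μ) ^ (1 / qinf) ≤
            luxNorm μ q ((qball d c r).indicator ω) ∧
          luxNorm μ q ((qball d c r).indicator ω) ≤
            CC * (∫⁻ x in qball d c r, ω x ^ (q x).toReal ∂μ) ^ (1 / qinf) := by
  obtain ⟨hA01, hd0, hdeq, hdsym, hdtri⟩ := hd
  obtain ⟨hCmu1, hdb⟩ := hdbl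
  obtain ⟨hqm, hq1, hqT, hqS⟩ := hq
  obtain ⟨hpm, hp1, hpT, hpS⟩ := hp
  obtain ⟨hωm, hωae, hωloc⟩ := hω
  obtain ⟨Cinf, hCinf0, hCinf⟩ := hqinf
  have htq1 : ∀ x, 1 ≤ (q x).toReal := fun x => S9.one_le_toReal (hq1 x) (hqT x)
  have htq0 : ∀ x, 0 < (q x).toReal := fun x => lt_of_lt_of_le one_pos (htq1 x)
  -- ball measures are positive and finite
  have hball_posfin : ∀ (c : X) (r : ℝ), 0 < r →
      μ (qball d c r) ≠ 0 ∧ μ (qball d c r) ≠ ∞ := by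
    intro c r hr
    constructor
    · have h := (hdb c (r/2) (by linarith)).1
      have h2 : 2*(r/2) = r := by ring
      rw [h2] at h
      exact ne_of_gt h
    · have h := (hdb c r hr).2.2
      have hle : μ (qball d c r) ≤ Cμ * μ (qball d c r) :=
        le_mul_of_one_le_left zero_le hCmu1
      exact (lt_of_le_of_lt hle h).ne
  have hCmuT : Cμ ≠ ∞ := by
    intro hT
    have h := (hdb x0 1 one_pos).2.2
    rw [hT, ENNReal.top_mul (hball_posfin x0 1 one_pos).1] at h
    exact (lt_irrefl _) h
  have hCmu0 : Cμ ≠ 0 := fun h => by simp [h] at hCmu1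
  have hmu0 : μ ≠ 0 := by
    intro h
    have h2 := (hball_posfin x0 1 one_pos).1
    rw [h] at h2
    simp at h2
  -- Q
  have hQeT : essSup q μ ≠ ∞ := hqS.ne
  set Q := (essSup q μ).toReal with hQdef
  have hQae : ∀ᵐ x ∂μ, (q x).toReal ≤ Q := by
    filter_upwards [ENNReal.ae_le_essSup q] with x hx
    exact ENNReal.toReal_mono hQeT hx
  have hQ1 : (1:ℝ) ≤ Q := by
    have hne : (ae μ).NeBot := ae_neBot.mpr hmu0
    obtain ⟨x, hx⟩ := (ENNReal.ae_le_essSup (μ := μ) q).exists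
    exact S9.one_le_toReal (le_trans (hq1 x) hx) hQeT
  have hQ0 : (0:ℝ) ≤ Q := by linarith
  -- conjExp facts
  have hce1 : ∀ x, 1 ≤ conjExp p x := by
    intro x
    unfold conjExp
    by_cases hpx : p x = ∞
    · simp [hpx]
    simp only [hpx, if_false]
    by_cases hp1x : p x = 1
    · rw [hp1x]
      norm_num
    · have hlt : 1 < p x := lt_of_le_of_ne (hp1 x) (Ne.symm hp1x)
      have hsub0 : p x - 1 ≠ 0 := by
        rw [ne_eq, tsub_eq_zero_iff_le]
        exact not_le.mpr hlt
      have hsubT : p x - 1 ≠ ∞ := ne_top_of_le_ne_top (hpT x) tsub_le_self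
      rw [ENNReal.le_div_iff_mul_le (Or.inl hsub0) (Or.inl hsubT), one_mul]
      exact tsub_le_self
  have hcem : Measurable (conjExp p) := by
    unfold conjExp
    exact Measurable.ite (hpm (measurableSet_singleton ∞)) measurable_const
      (hpm.div (hpm.sub measurable_const))
  -- weight positivity
  have hωpos : ∀ᵐ x ∂μ, 0 < ω x := hωae.mono fun x hx => hx.1
  have hωinv_pos : ∀ᵐ x ∂μ, 0 < (ω x)⁻¹ :=
    hωae.mono fun x hx => ENNReal.inv_pos.mpr hx.2.ne
  -- the Apq constant per ball
  have hAball : ∀ (c : X) (r : ℝ), 0 < r →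
      μ (qball d c r) ^ (η - 1) * luxNorm μ q ((qball d c r).indicator ω) *
        luxNorm μ (conjExp p) ((qball d c r).indicator fun x => (ω x)⁻¹)
        ≤ ApqConst d μ η p q ω := by
    intro c r hr
    exact le_iSup_of_le c (le_iSup_of_le r (le_iSup_of_le hr le_rfl))
  -- unit ball quantities
  have hB1m := hball x0 1
  obtain ⟨hB10, hB1T⟩ := hball_posfin x0 1 one_pos
  set m1 := luxNorm μ (conjExp p) ((qball d x0 1).indicator fun x => (ω x)⁻¹) with hm1def
  have hm1pos : 0 < m1 :=
    S9.luxNorm_indicator_pos μ _ hcem hce1 hB1m hB10 hB1T _ hωm.inv hωinv_pos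
  have hN1pos : 0 < luxNorm μ q ((qball d x0 1).indicator ω) :=
    S9.luxNorm_indicator_pos μ q hqm hq1 hB1m hB10 hB1T ω hωm hωpos
  have hm1T : m1 ≠ ∞ := by
    intro hT
    have h := hAball x0 1 one_pos
    rw [← hm1def, hT] at h
    rw [ENNReal.mul_top (mul_ne_zero (S9.rpow_pos_fin hB10 hB1T (η - 1)).1 hN1pos.ne')] at h
    exact hA (top_le_iff.mp h)
  -- norm bound on balls containing the unit ball
  have hNbound : ∀ (c : X) (r : ℝ), 0 < r → qball d x0 1 ⊆ qball d c r →
      luxNorm μ q ((qball d c r).indicator ω)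
        ≤ ApqConst d μ η p q ω * m1⁻¹ * μ (qball d c r) ^ (1 - η) := by
    intro c r hr hsub
    have h := hAball c r hr
    have hm : m1 ≤ luxNorm μ (conjExp p) ((qball d c r).indicator fun x => (ω x)⁻¹) :=
      S9.luxNorm_mono μ _ fun x =>
        Set.indicator_le_indicator_of_subset hsub (fun y => zero_le) x
    obtain ⟨hbpos, hbT⟩ := hball_posfin c r hr
    obtain ⟨hx0, hxT⟩ := S9.rpow_pos_fin hbpos hbT (η - 1)
    have h2 : μ (qball d c r) ^ (η - 1) * luxNorm μ q ((qball d c r).indicator ω) * m1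
        ≤ ApqConst d μ η p q ω := le_trans (by gcongr) h
    have hmul := mul_le_mul_left h2 ((μ (qball d c r) ^ (η - 1))⁻¹ * m1⁻¹)
    have hL : μ (qball d c r) ^ (η - 1) * luxNorm μ q ((qball d c r).indicator ω) * m1 *
        ((μ (qball d c r) ^ (η - 1))⁻¹ * m1⁻¹) = luxNorm μ q ((qball d c r).indicator ω) := by
      have e1 : μ (qball d c r) ^ (η - 1) * (μ (qball d c r) ^ (η - 1))⁻¹ = 1 :=
        ENNReal.mul_inv_cancel hx0 hxT
      have e2 : m1 * m1⁻¹ = 1 := ENNReal.mul_inv_cancel hm1pos.ne' hm1T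
      calc μ (qball d c r) ^ (η - 1) * luxNorm μ q ((qball d c r).indicator ω) * m1 *
          ((μ (qball d c r) ^ (η - 1))⁻¹ * m1⁻¹)
          = (μ (qball d c r) ^ (η - 1) * (μ (qball d c r) ^ (η - 1))⁻¹) * (m1 * m1⁻¹) *
            luxNorm μ q ((qball d c r).indicator ω) := by ring
        _ = _ := by rw [e1, e2, one_mul, one_mul]
    rw [hL] at hmul
    have hR : (μ (qball d c r) ^ (η - 1))⁻¹ = μ (qball d c r) ^ (1 - η) := by
      rw [show (1 - η) = -(η - 1) by ring, ENNReal.rpow_neg]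
    refine le_trans hmul (le_of_eq ?_)
    rw [hR]
    ring
  have hNfin : ∀ (c : X) (r : ℝ), 0 < r → qball d x0 1 ⊆ qball d c r →
      luxNorm μ q ((qball d c r).indicator ω) ≠ ∞ := by
    intro c r hr hsub
    refine ne_top_of_le_ne_top ?_ (hNbound c r hr hsub)
    exact ENNReal.mul_ne_top (ENNReal.mul_ne_top hA (ENNReal.inv_ne_top.mpr hm1pos.ne'))
      (S9.rpow_pos_fin (hball_posfin c r hr).1 (hball_posfin c r hr).2 (1 - η)).2
  -- log constants
  have hCmutR : (1:ℝ) ≤ Cμ.toReal := S9.one_le_toReal hCmu1 hCmuT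
  have hlogCmu : (0:ℝ) ≤ Real.log Cμ.toReal := Real.log_nonneg hCmutR
  have hlog2 : (0:ℝ) < Real.log 2 := Real.log_pos (by norm_num)
  set D := max 1 (Q * Real.log Cμ.toReal / Real.log 2) with hDdef
  have hD1 : (1:ℝ) ≤ D := le_max_left _ _
  have hD0 : (0:ℝ) < D := by linarith
  have hDkey : Q * Real.log Cμ.toReal ≤ D * Real.log 2 := by
    have h1 : Q * Real.log Cμ.toReal / Real.log 2 ≤ D := le_max_right _ _
    calc Q * Real.log Cμ.toReal
        = (Q * Real.log Cμ.toReal / Real.log 2) * Real.log 2 := by field_simp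
      _ ≤ D * Real.log 2 := by gcongr
  -- doubling growth
  have hgrow : ∀ k : ℕ, μ (qball d x0 ((2:ℝ)^k)) ≤ Cμ^k * μ (qball d x0 1) := by
    intro k
    induction k with
    | zero => simp
    | succ k ih =>
        have h2 : ((2:ℝ)^(k+1)) = 2 * (2:ℝ)^k := by ring
        have hpos : (0:ℝ) < (2:ℝ)^k := by positivity
        have h3 := (hdb x0 ((2:ℝ)^k) hpos).2.1
        rw [← h2] at h3
        calc μ (qball d x0 ((2:ℝ)^(k+1))) ≤ Cμ * μ (qball d x0 ((2:ℝ)^k)) := h3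
          _ ≤ Cμ * (Cμ^k * μ (qball d x0 1)) := by gcongr
          _ = Cμ^(k+1) * μ (qball d x0 1) := by ring
  -- the polynomial growth constant
  set C6 := ApqConst d μ η p q ω * m1⁻¹ * μ (qball d x0 1) ^ (1 - η) with hC6def
  have hC6T : C6 ≠ ∞ :=
    ENNReal.mul_ne_top (ENNReal.mul_ne_top hA (ENNReal.inv_ne_top.mpr hm1pos.ne'))
      (S9.rpow_pos_fin hB10 hB1T (1 - η)).2
  set C7 := max C6 1 with hC7def
  have hC7T : C7 ≠ ∞ := by
    rw [hC7def]
    simp only [ne_eq, max_eq_top, not_or]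
    exact ⟨hC6T, by simp⟩
  have hC71 : (1:ℝ≥0∞) ≤ C7 := le_max_right _ _
  set CW := (2 * C7) ^ Q * Cμ ^ Q with hCWdef
  have hCWT : CW ≠ ∞ :=
    ENNReal.mul_ne_top
      (ENNReal.rpow_ne_top_of_nonneg hQ0 (ENNReal.mul_ne_top (by norm_num) hC7T))
      (ENNReal.rpow_ne_top_of_nonneg hQ0 hCmuT)
  have hCW1 : (1:ℝ≥0∞) ≤ CW := by
    rw [hCWdef]
    have a1 : (1:ℝ≥0∞) ≤ (2 * C7) ^ Q := by
      calc (1:ℝ≥0∞) = 1 ^ Q := (ENNReal.one_rpow Q).symm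
        _ ≤ (2 * C7) ^ Q := ENNReal.rpow_le_rpow
            (by calc (1:ℝ≥0∞) ≤ 2 := by norm_num
                _ = 2 * 1 := (mul_one 2).symm
                _ ≤ 2 * C7 := by gcongr) hQ0
    have a2 : (1:ℝ≥0∞) ≤ Cμ ^ Q := by
      calc (1:ℝ≥0∞) = 1 ^ Q := (ENNReal.one_rpow Q).symm
        _ ≤ Cμ ^ Q := ENNReal.rpow_le_rpow hCmu1 hQ0
    calc (1:ℝ≥0∞) = 1 * 1 := (mul_one 1).symm
      _ ≤ (2 * C7) ^ Q * Cμ ^ Q := mul_le_mul' a1 a2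
  have hCW0 : CW ≠ 0 := (lt_of_lt_of_le one_pos hCW1).ne'
  -- growth of the weighted integral at x0
  have hWgrow : ∀ lam : ℝ≥0∞, 1 ≤ lam → lam ≠ ∞ →
      (∫⁻ x in qball d x0 (Real.exp (Real.log lam.toReal / (2*D))), ω x ^ (q x).toReal ∂μ)
        ≤ CW * lam ^ ((1:ℝ)/2) := by
    intro lam h1 hT
    have hltR1 : (1:ℝ) ≤ lam.toReal := S9.one_le_toReal h1 hT
    have hltR0 : (0:ℝ) < lam.toReal := by linarith
    set L := Real.log lam.toReal with hLdef
    have hL0 : (0:ℝ) ≤ L := Real.log_nonneg hltR1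
    set T := Real.exp (L / (2*D)) with hTdef
    have hT1 : (1:ℝ) ≤ T := Real.one_le_exp (by positivity)
    have hT0 : (0:ℝ) < T := by linarith
    set k := ⌈Real.logb 2 T⌉₊ with hkdef
    have hlogbT0 : (0:ℝ) ≤ Real.logb 2 T := Real.logb_nonneg (by norm_num) hT1
    have hTle : T ≤ (2:ℝ)^k := by
      have h2 : Real.logb 2 T ≤ (k:ℝ) := Nat.le_ceil _
      have h3 := (Real.logb_le_iff_le_rpow (by norm_num) hT0).mp h2
      rwa [Real.rpow_natCast] at h3
    have h2k1 : (1:ℝ) ≤ (2:ℝ)^k := one_le_pow₀ (by norm_num)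
    have h2k0 : (0:ℝ) < (2:ℝ)^k := by positivity
    have hksmall : (k:ℝ) ≤ Real.logb 2 T + 1 := (Nat.ceil_lt_add_one hlogbT0).le
    have hsub1 : qball d x0 1 ⊆ qball d x0 ((2:ℝ)^k) :=
      fun y hy => lt_of_lt_of_le hy h2k1
    -- bound the norm on the dyadic ball
    have hNk : luxNorm μ q ((qball d x0 ((2:ℝ)^k)).indicator ω) ≤ C6 * Cμ ^ (k:ℝ) := by
      refine le_trans (hNbound x0 ((2:ℝ)^k) h2k0 hsub1) ?_
      have hmu : μ (qball d x0 ((2:ℝ)^k)) ^ (1 - η)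
          ≤ Cμ ^ (k:ℝ) * μ (qball d x0 1) ^ (1 - η) := by
        calc μ (qball d x0 ((2:ℝ)^k)) ^ (1 - η)
            ≤ (Cμ^k * μ (qball d x0 1)) ^ (1 - η) :=
              ENNReal.rpow_le_rpow (hgrow k) (by linarith)
          _ = (Cμ^k) ^ (1 - η) * μ (qball d x0 1) ^ (1 - η) :=
              ENNReal.mul_rpow_of_nonneg _ _ (by linarith)
          _ ≤ Cμ ^ (k:ℝ) * μ (qball d x0 1) ^ (1 - η) := by
              gcongr
              rw [← ENNReal.rpow_natCast Cμ k, ← ENNReal.rpow_mul]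
              refine ENNReal.rpow_le_rpow_of_exponent_le hCmu1 ?_
              have hk0 : (0:ℝ) ≤ (k:ℝ) := Nat.cast_nonneg k
              nlinarith
      calc ApqConst d μ η p q ω * m1⁻¹ * μ (qball d x0 ((2:ℝ)^k)) ^ (1 - η)
          ≤ ApqConst d μ η p q ω * m1⁻¹ * (Cμ ^ (k:ℝ) * μ (qball d x0 1) ^ (1 - η)) := by
            gcongr
        _ = C6 * Cμ ^ (k:ℝ) := by rw [hC6def]; ring
    have hCk1 : (1:ℝ≥0∞) ≤ Cμ ^ (k:ℝ) := by
      calc (1:ℝ≥0∞) = 1 ^ (k:ℝ) := (ENNReal.one_rpow _).symm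
        _ ≤ Cμ ^ (k:ℝ) := ENNReal.rpow_le_rpow hCmu1 (Nat.cast_nonneg k)
    have hmaxk : max (luxNorm μ q ((qball d x0 ((2:ℝ)^k)).indicator ω)) 1
        ≤ C7 * Cμ ^ (k:ℝ) := by
      refine max_le (le_trans hNk ?_) ?_
      · gcongr
        exact le_max_left _ _
      · calc (1:ℝ≥0∞) = 1 * 1 := (one_mul 1).symm
          _ ≤ C7 * Cμ ^ (k:ℝ) := mul_le_mul' hC71 hCk1
    have hNkT : luxNorm μ q ((qball d x0 ((2:ℝ)^k)).indicator ω) ≠ ∞ :=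
      hNfin x0 ((2:ℝ)^k) h2k0 hsub1
    have hWk : (∫⁻ x in qball d x0 ((2:ℝ)^k), ω x ^ (q x).toReal ∂μ)
        ≤ (2 * max (luxNorm μ q ((qball d x0 ((2:ℝ)^k)).indicator ω)) 1) ^ Q :=
      S9.W_le_of_norm_ne_top μ q ω (hball x0 _) hqT htq0 hQ0 hQae hNkT
    have hWk2 : (∫⁻ x in qball d x0 T, ω x ^ (q x).toReal ∂μ)
        ≤ (2 * C7) ^ Q * Cμ ^ ((k:ℝ) * Q) := by
      calc (∫⁻ x in qball d x0 T, ω x ^ (q x).toReal ∂μ)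
          ≤ ∫⁻ x in qball d x0 ((2:ℝ)^k), ω x ^ (q x).toReal ∂μ :=
            lintegral_mono_set (fun y hy => lt_of_lt_of_le hy hTle)
        _ ≤ (2 * max (luxNorm μ q ((qball d x0 ((2:ℝ)^k)).indicator ω)) 1) ^ Q := hWk
        _ ≤ (2 * (C7 * Cμ ^ (k:ℝ))) ^ Q := ENNReal.rpow_le_rpow (by gcongr) hQ0
        _ = ((2 * C7) * Cμ ^ (k:ℝ)) ^ Q := by ring_nf
        _ = (2 * C7) ^ Q * (Cμ ^ (k:ℝ)) ^ Q := ENNReal.mul_rpow_of_nonneg _ _ hQ0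
        _ = (2 * C7) ^ Q * Cμ ^ ((k:ℝ) * Q) := by rw [← ENNReal.rpow_mul]
    have hfinal : Cμ ^ ((k:ℝ) * Q) ≤ Cμ ^ Q * lam ^ ((1:ℝ)/2) := by
      have hstep : Cμ ^ ((k:ℝ) * Q) ≤ Cμ ^ ((Real.logb 2 T + 1) * Q) := by
        refine ENNReal.rpow_le_rpow_of_exponent_le hCmu1 ?_
        nlinarith
      refine le_trans hstep ?_
      have hsplit2 : ((Real.logb 2 T + 1) * Q) = Q + Real.logb 2 T * Q := by ring
      rw [hsplit2, ENNReal.rpow_add _ _ hCmu0 hCmuT]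
      gcongr
      -- Cμ ^ (logb 2 T * Q) ≤ lam ^ (1/2)
      have hCmuR0 : (0:ℝ) < Cμ.toReal := by linarith
      have hlogbT : Real.logb 2 T = L / (2*D) / Real.log 2 := by
        rw [hTdef, Real.logb, Real.log_exp]
      have hkey : Real.log Cμ.toReal * (Real.logb 2 T * Q) ≤ L * (1/2) := by
        rw [hlogbT]
        rw [div_div]
        have hexp : Real.log Cμ.toReal * (L / (2*(D*Real.log 2)) * Q)
            = (Q * Real.log Cμ.toReal) * L / (2*(D*Real.log 2)) := by ring
        rw [show (2:ℝ)*D*Real.log 2 = 2*(D*Real.log 2) by ring, hexp]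
        have h7 : (Q * Real.log Cμ.toReal) * L ≤ (D * Real.log 2) * L :=
          mul_le_mul_of_nonneg_right hDkey hL0
        have h8 : (Q * Real.log Cμ.toReal) * L / (2*(D*Real.log 2))
            ≤ (D * Real.log 2) * L / (2*(D*Real.log 2)) :=
          div_le_div_of_nonneg_right h7 (by positivity) |>.trans_eq rfl
        refine le_trans h8 (le_of_eq ?_)
        field_simp
      calc Cμ ^ (Real.logb 2 T * Q)
          = ENNReal.ofReal (Cμ.toReal ^ (Real.logb 2 T * Q)) := by
            rw [← ENNReal.ofReal_rpow_of_pos hCmuR0, ENNReal.ofReal_toReal hCmuT]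
        _ = ENNReal.ofReal (Real.exp (Real.log Cμ.toReal * (Real.logb 2 T * Q))) := by
            rw [Real.rpow_def_of_pos hCmuR0]
        _ ≤ ENNReal.ofReal (Real.exp (L * (1/2))) :=
            ENNReal.ofReal_le_ofReal (Real.exp_le_exp.mpr hkey)
        _ = ENNReal.ofReal (lam.toReal ^ ((1:ℝ)/2)) := by
            rw [Real.rpow_def_of_pos hltR0, hLdef]
        _ = lam ^ ((1:ℝ)/2) := by
            rw [← ENNReal.ofReal_rpow_of_pos hltR0, ENNReal.ofReal_toReal hT]
    calc (∫⁻ x in qball d x0 T, ω x ^ (q x).toReal ∂μ)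
        ≤ (2 * C7) ^ Q * Cμ ^ ((k:ℝ) * Q) := hWk2
      _ ≤ (2 * C7) ^ Q * (Cμ ^ Q * lam ^ ((1:ℝ)/2)) := by gcongr
      _ = CW * lam ^ ((1:ℝ)/2) := by rw [hCWdef]; ring
  -- the constant controlling lam^ε on the far region
  set Ecst := ENNReal.ofReal (Real.exp (2*Cinf*D)) with hEdef
  have hE1 : (1:ℝ≥0∞) ≤ Ecst := by
    rw [hEdef, show (1:ℝ≥0∞) = ENNReal.ofReal 1 by simp]
    refine ENNReal.ofReal_le_ofReal (Real.one_le_exp ?_)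
    positivity
  have hET : Ecst ≠ ∞ := ENNReal.ofReal_ne_top
  have hE0 : Ecst ≠ 0 := (lt_of_lt_of_le one_pos hE1).ne'
  have hlogepos : ∀ x : X, (0:ℝ) < Real.log (Real.exp 1 + d x x0) := by
    intro x
    have hd' : (0:ℝ) ≤ d x x0 := hd0 x x0
    have h2 : (1:ℝ) ≤ Real.log (Real.exp 1 + d x x0) := by
      calc (1:ℝ) = Real.log (Real.exp 1) := (Real.log_exp 1).symm
        _ ≤ _ := Real.log_le_log (Real.exp_pos 1) (by linarith)
    linarith
  have hfar : ∀ lam : ℝ≥0∞, 1 ≤ lam → lam ≠ ∞ → ∀ x : X,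
      ¬ (d x0 x < Real.exp (Real.log lam.toReal / (2*D))) →
      lam ^ (Cinf / Real.log (Real.exp 1 + d x x0)) ≤ Ecst := by
    intro lam h1 hT x hx
    push_neg at hx
    have hltR1 : (1:ℝ) ≤ lam.toReal := S9.one_le_toReal h1 hT
    have hltR0 : (0:ℝ) < lam.toReal := by linarith
    set L := Real.log lam.toReal with hLdef
    have hL0 : (0:ℝ) ≤ L := Real.log_nonneg hltR1
    have hdT : Real.exp (L/(2*D)) ≤ d x x0 := by rw [hdsym x x0]; exact hx
    have hloge := hlogepos x
    set ε := Cinf / Real.log (Real.exp 1 + d x x0) with hεdef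
    have hε0 : (0:ℝ) ≤ ε := div_nonneg hCinf0 hloge.le
    have hkey : ε * L ≤ 2*Cinf*D := by
      rw [hεdef, div_mul_eq_mul_div, div_le_iff₀ hloge]
      have h4 : L/(2*D) ≤ Real.log (Real.exp 1 + d x x0) := by
        calc L/(2*D) = Real.log (Real.exp (L/(2*D))) := (Real.log_exp _).symm
          _ ≤ _ := Real.log_le_log (Real.exp_pos _)
              (by linarith [Real.exp_pos (1:ℝ), hdT])
      have h3 : L ≤ 2*D*Real.log (Real.exp 1 + d x x0) := by
        calc L = (2*D) * (L/(2*D)) := by field_simp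
          _ ≤ (2*D) * Real.log (Real.exp 1 + d x x0) := by
              have h2D : (0:ℝ) < 2*D := by linarith
              exact mul_le_mul_of_nonneg_left h4 h2D.le
      calc Cinf * L ≤ Cinf * (2*D*Real.log (Real.exp 1 + d x x0)) :=
            mul_le_mul_of_nonneg_left h3 hCinf0
        _ = 2*Cinf*D * Real.log (Real.exp 1 + d x x0) := by ring
    calc lam ^ ε = ENNReal.ofReal (lam.toReal ^ ε) := by
          rw [← ENNReal.ofReal_rpow_of_pos hltR0, ENNReal.ofReal_toReal hT]
      _ = ENNReal.ofReal (Real.exp (L * ε)) := by rw [Real.rpow_def_of_pos hltR0]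
      _ ≤ Ecst := by
          rw [hEdef]
          refine ENNReal.ofReal_le_ofReal (Real.exp_le_exp.mpr ?_)
          rw [mul_comm]
          exact hkey
  -- a generic splitting of the modular integral into near and far parts
  have hsplit : ∀ (c : X) (r T : ℝ) (f : X → ℝ≥0∞),
      ∫⁻ x in qball d c r, f x ∂μ
        = (∫⁻ x in qball d c r ∩ qball d x0 T, f x ∂μ)
          + ∫⁻ x in qball d c r \ qball d x0 T, f x ∂μ := by
    intro c r T f
    conv_lhs => rw [← Set.inter_union_diff (qball d c r) (qball d x0 T)]
    exact lintegral_union ((hball c r).diff (hball x0 T))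
      (Set.disjoint_left.mpr fun x hx1 hx2 => hx2.2 hx1.2)
  -- case split on qinf
  rcases lt_or_ge qinf 1 with hqlt1 | hqge1
  · -- bounded case: the whole space is a ball
    have hbdd : ∀ y, d x0 y < Real.exp (Cinf/(1-qinf)) + 1 := by
      intro y
      have h := hCinf y
      have h1q : (0:ℝ) < 1 - qinf := by linarith
      have hloge := hlogepos y
      have habs : 1 - qinf ≤ |(q y).toReal - qinf| := by
        have h2 := htq1 y
        rw [abs_of_nonneg (by linarith)]
        linarith
      have hlog_le : Real.log (Real.exp 1 + d y x0) ≤ Cinf/(1-qinf) := by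
        have h5 := le_trans habs h
        rw [le_div_iff₀ hloge] at h5
        rw [le_div_iff₀ h1q]
        have hc := mul_comm (1-qinf) (Real.log (Real.exp 1 + d y x0))
        linarith
      have hexp_le : Real.exp 1 + d y x0 ≤ Real.exp (Cinf/(1-qinf)) := by
        have h6 := Real.exp_le_exp.mpr hlog_le
        rwa [Real.exp_log (by linarith [Real.exp_pos (1:ℝ), hd0 y x0])] at h6
      rw [hdsym x0 y]
      linarith [Real.exp_pos (1:ℝ)]
    set R := Real.exp (Cinf/(1-qinf)) + 1 with hRdef
    have hRpos : (0:ℝ) < R := by positivity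
    have hR1 : (1:ℝ) ≤ R := by have := Real.exp_pos (Cinf/(1-qinf)); rw [hRdef]; linarith
    have hBXuniv : qball d x0 R = Set.univ := Set.eq_univ_of_forall fun y => hbdd y
    obtain ⟨hBX0, hBXT⟩ := hball_posfin x0 R hRpos
    set NX := luxNorm μ q ((qball d x0 R).indicator ω) with hNXdef
    have hNXT : NX ≠ ∞ :=
      hNfin x0 R hRpos (fun y hy => lt_of_lt_of_le hy hR1)
    set Wmax := (2 * max NX 1) ^ Q with hWmaxdef
    have hWmaxle : (∫⁻ x in qball d x0 R, ω x ^ (q x).toReal ∂μ) ≤ Wmax :=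
      S9.W_le_of_norm_ne_top μ q ω (hball x0 R) hqT htq0 hQ0 hQae hNXT
    have hbase0 : (2 * max NX 1 : ℝ≥0∞) ≠ 0 :=
      mul_ne_zero (by norm_num) (lt_of_lt_of_le one_pos (le_max_right _ _)).ne'
    have hbaseT : (2 * max NX 1 : ℝ≥0∞) ≠ ∞ := by
      refine ENNReal.mul_ne_top (by norm_num) ?_
      simp only [ne_eq, max_eq_top, not_or]
      exact ⟨hNXT, by simp⟩
    have hWmax0 : Wmax ≠ 0 := (S9.rpow_pos_fin hbase0 hbaseT Q).1
    have hWmaxT : Wmax ≠ ∞ := (S9.rpow_pos_fin hbase0 hbaseT Q).2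
    set P := Wmax ^ (1/qinf) with hPdef
    have hP0 : P ≠ 0 := (S9.rpow_pos_fin hWmax0 hWmaxT _).1
    have hPT : P ≠ ∞ := (S9.rpow_pos_fin hWmax0 hWmaxT _).2
    set hi := max 1 P with hhidef
    set lo := min 1 P with hlodef
    have hhi0 : hi ≠ 0 := (lt_of_lt_of_le one_pos (le_max_left _ _)).ne'
    have hhiT : hi ≠ ∞ := by
      rw [hhidef]
      simp only [ne_eq, max_eq_top, not_or]
      exact ⟨by simp, hPT⟩
    have hlo0 : lo ≠ 0 := by
      rw [hlodef]
      rcases min_cases (1:ℝ≥0∞) P with ⟨hmin, _⟩ | ⟨hmin, _⟩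
      · rw [hmin]; exact one_ne_zero
      · rw [hmin]; exact hP0
    have hloT : lo ≠ ∞ := ne_top_of_le_ne_top (by simp) (min_le_left _ _)
    refine ⟨hi⁻¹, NX * lo⁻¹, ?_, ?_, ?_⟩
    · exact ENNReal.inv_pos.mpr hhiT
    · exact ENNReal.mul_ne_top hNXT (ENNReal.inv_ne_top.mpr hlo0)
    intro c r hr hN1
    have hWB1 : 1 ≤ ∫⁻ x in qball d c r, ω x ^ (q x).toReal ∂μ :=
      S9.W_ge_one μ q ω (hball c r) hqT htq0 hQ1 hQae hN1
    have hWBle : (∫⁻ x in qball d c r, ω x ^ (q x).toReal ∂μ) ≤ Wmax := by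
      refine le_trans ?_ hWmaxle
      exact lintegral_mono_set (by rw [hBXuniv]; exact Set.subset_univ _)
    have hNle : luxNorm μ q ((qball d c r).indicator ω) ≤ NX := by
      refine S9.luxNorm_mono μ q fun x => ?_
      refine Set.indicator_le_indicator_of_subset ?_ (fun y => zero_le) x
      rw [hBXuniv]; exact Set.subset_univ _
    have hWhi : (∫⁻ x in qball d c r, ω x ^ (q x).toReal ∂μ) ^ (1/qinf) ≤ hi := by
      rcases le_or_gt 0 (1/qinf) with he | he
      · refine le_trans ?_ (le_max_right 1 P)
        rw [hPdef]
        exact ENNReal.rpow_le_rpow hWBle he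
      · refine le_trans ?_ (le_max_left 1 P)
        calc (∫⁻ x in qball d c r, ω x ^ (q x).toReal ∂μ) ^ (1/qinf)
            ≤ (1:ℝ≥0∞) ^ (1/qinf) := S9.rpow_le_rpow_left_of_nonpos he.le hWB1
          _ = 1 := ENNReal.one_rpow _
    have hWlo : lo ≤ (∫⁻ x in qball d c r, ω x ^ (q x).toReal ∂μ) ^ (1/qinf) := by
      rcases le_or_gt 0 (1/qinf) with he | he
      · refine le_trans (min_le_left 1 P) ?_
        calc (1:ℝ≥0∞) = 1 ^ (1/qinf) := (ENNReal.one_rpow _).symm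
          _ ≤ _ := ENNReal.rpow_le_rpow hWB1 he
      · refine le_trans (min_le_right 1 P) ?_
        rw [hPdef]
        exact S9.rpow_le_rpow_left_of_nonpos he.le hWBle
    constructor
    · calc hi⁻¹ * (∫⁻ x in qball d c r, ω x ^ (q x).toReal ∂μ) ^ (1/qinf)
          ≤ hi⁻¹ * hi := by gcongr
        _ = 1 := ENNReal.inv_mul_cancel hhi0 hhiT
        _ ≤ _ := hN1
    · calc luxNorm μ q ((qball d c r).indicator ω) ≤ NX := hNle
        _ = NX * lo⁻¹ * lo := by
            rw [mul_assoc, ENNReal.inv_mul_cancel hlo0 hloT, mul_one]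
        _ ≤ NX * lo⁻¹ * (∫⁻ x in qball d c r, ω x ^ (q x).toReal ∂μ) ^ (1/qinf) := by
            gcongr
  · -- main case : qinf ≥ 1
    have hqinf0 : qinf ≠ 0 := by linarith
    have hqinfpos : (0:ℝ) < qinf := by linarith
    have h1q0 : (0:ℝ) ≤ 1/qinf := by positivity
    have h1qpos : (0:ℝ) < 1/qinf := by positivity
    set A := 2 * Ecst + ((2*CW)^(2:ℝ))^qinf with hAdef
    have h2CWT : (2*CW : ℝ≥0∞) ≠ ∞ := ENNReal.mul_ne_top (by norm_num) hCWT
    have hsqT : ((2*CW)^(2:ℝ) : ℝ≥0∞) ≠ ∞ :=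
      ENNReal.rpow_ne_top_of_nonneg (by norm_num) h2CWT
    have hAT : A ≠ ∞ := by
      rw [hAdef]
      exact ENNReal.add_ne_top.mpr ⟨ENNReal.mul_ne_top (by norm_num) hET,
        ENNReal.rpow_ne_top_of_nonneg (by linarith) hsqT⟩
    have hA1 : (1:ℝ≥0∞) ≤ A := by
      rw [hAdef]
      refine le_trans ?_ le_self_add
      calc (1:ℝ≥0∞) ≤ 2 := by norm_num
        _ = 2*1 := (mul_one 2).symm
        _ ≤ 2*Ecst := by gcongr
    have hA0 : A ≠ 0 := (lt_of_lt_of_le one_pos hA1).ne'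
    set Cfin := ((CW + Ecst) * (2:ℝ≥0∞)^qinf) ^ (1/qinf) with hCfindef
    have hbase20 : ((2:ℝ≥0∞)^qinf) ≠ 0 := (S9.rpow_pos_fin (by norm_num) (by norm_num) qinf).1
    have hbase2T : ((2:ℝ≥0∞)^qinf) ≠ ∞ := (S9.rpow_pos_fin (by norm_num) (by norm_num) qinf).2
    have hCE0 : (CW + Ecst) ≠ 0 := by
      intro h
      rw [add_eq_zero] at h
      exact hCW0 h.1
    have hCET : (CW + Ecst) ≠ ∞ := ENNReal.add_ne_top.mpr ⟨hCWT, hET⟩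
    have hCfin0 : Cfin ≠ 0 :=
      (S9.rpow_pos_fin (mul_ne_zero hCE0 hbase20) (ENNReal.mul_ne_top hCET hbase2T) _).1
    have hCfinT : Cfin ≠ ∞ :=
      (S9.rpow_pos_fin (mul_ne_zero hCE0 hbase20) (ENNReal.mul_ne_top hCET hbase2T) _).2
    refine ⟨Cfin⁻¹, A ^ (1/qinf), ENNReal.inv_pos.mpr hCfinT,
      ENNReal.rpow_ne_top_of_nonneg h1q0 hAT, ?_⟩
    intro c r hr hN1
    set N := luxNorm μ q ((qball d c r).indicator ω) with hNdef
    set W := ∫⁻ x in qball d c r, ω x ^ (q x).toReal ∂μ with hWdef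
    have hWB1 : 1 ≤ W := S9.W_ge_one μ q ω (hball c r) hqT htq0 hQ1 hQae hN1
    have hW0 : W ≠ 0 := (lt_of_lt_of_le one_pos hWB1).ne'
    have hCC0 : (A ^ (1/qinf) : ℝ≥0∞) ≠ 0 := (S9.rpow_pos_fin hA0 hAT _).1
    by_cases hWT : W = ∞
    · constructor
      · -- lower bound : N must be infinite
        have hNT : N = ∞ := by
          by_contra hNT
          have h12 := S9.W_le_of_norm_ne_top μ q ω (hball c r) hqT htq0 hQ0 hQae hNT
          have hbT : (2 * max N 1 : ℝ≥0∞) ≠ ∞ := by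
            refine ENNReal.mul_ne_top (by norm_num) ?_
            simp only [ne_eq, max_eq_top, not_or]
            exact ⟨hNT, by simp⟩
          exact (ne_top_of_le_ne_top
            (ENNReal.rpow_ne_top_of_nonneg hQ0 hbT) h12) hWT
        rw [hNT]
        exact le_top
      · rw [hWT, ENNReal.top_rpow_of_pos h1qpos, ENNReal.mul_top hCC0]
        exact le_top
    · -- W is finite
      set lam := (A * W) ^ (1/qinf) with hlamdef
      have hAW1 : (1:ℝ≥0∞) ≤ A*W := by
        calc (1:ℝ≥0∞) = 1*1 := (mul_one 1).symm
          _ ≤ A*W := mul_le_mul' hA1 hWB1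
      have hAWT : A*W ≠ ∞ := ENNReal.mul_ne_top hAT hWT
      have hlam1 : (1:ℝ≥0∞) ≤ lam := by
        calc (1:ℝ≥0∞) = 1 ^ (1/qinf) := (ENNReal.one_rpow _).symm
          _ ≤ lam := ENNReal.rpow_le_rpow hAW1 h1q0
      have hlamT : lam ≠ ∞ := ENNReal.rpow_ne_top_of_nonneg h1q0 hAWT
      have hlam0 : lam ≠ 0 := (lt_of_lt_of_le one_pos hlam1).ne'
      have hlamq : lam ^ qinf = A * W := by
        rw [hlamdef, ← ENNReal.rpow_mul, one_div, inv_mul_cancel₀ hqinf0, ENNReal.rpow_one]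
      set T := Real.exp (Real.log lam.toReal / (2*D)) with hTdef2
      have hlam_sq : (2*CW)^(2:ℝ) ≤ lam := by
        have h8 : (((2*CW)^(2:ℝ))^qinf : ℝ≥0∞) ≤ lam ^ qinf := by
          rw [hlamq]
          calc (((2*CW)^(2:ℝ))^qinf : ℝ≥0∞) ≤ A := by rw [hAdef]; exact le_add_self
            _ = A * 1 := (mul_one A).symm
            _ ≤ A * W := by gcongr
        have h9 := ENNReal.rpow_le_rpow h8 h1q0
        rwa [← ENNReal.rpow_mul ((2*CW)^(2:ℝ)) qinf (1/qinf),
          ← ENNReal.rpow_mul lam qinf (1/qinf),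
          mul_one_div_cancel hqinf0, ENNReal.rpow_one, ENNReal.rpow_one] at h9
      have hlam_half : 2*CW ≤ lam ^ ((1:ℝ)/2) := by
        calc (2*CW : ℝ≥0∞) = ((2*CW) ^ (2:ℝ)) ^ ((1:ℝ)/2) := by
              rw [← ENNReal.rpow_mul]
              norm_num
          _ ≤ lam ^ ((1:ℝ)/2) := ENNReal.rpow_le_rpow hlam_sq (by norm_num)
      have hnear : (∫⁻ x in qball d c r ∩ qball d x0 T, (ω x / lam) ^ (q x).toReal ∂μ)
          ≤ 2⁻¹ := by
        have hpt : ∀ x, (ω x / lam) ^ (q x).toReal ≤ lam⁻¹ * ω x ^ (q x).toReal := by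
          intro x
          calc (ω x / lam) ^ (q x).toReal
              = ω x ^ (q x).toReal / lam ^ (q x).toReal :=
                ENNReal.div_rpow_of_nonneg _ _ ENNReal.toReal_nonneg
            _ ≤ ω x ^ (q x).toReal / lam ^ (1:ℝ) :=
                ENNReal.div_le_div_left
                  (ENNReal.rpow_le_rpow_of_exponent_le hlam1 (htq1 x)) _
            _ = lam⁻¹ * ω x ^ (q x).toReal := by
                rw [ENNReal.rpow_one, div_eq_mul_inv, mul_comm]
        have hss : lam ^ ((1:ℝ)/2) * lam⁻¹ = (lam ^ ((1:ℝ)/2))⁻¹ := by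
          rw [← ENNReal.rpow_neg_one lam, ← ENNReal.rpow_add _ _ hlam0 hlamT,
            ← ENNReal.rpow_neg]
          congr 1
          norm_num
        calc (∫⁻ x in qball d c r ∩ qball d x0 T, (ω x / lam) ^ (q x).toReal ∂μ)
            ≤ ∫⁻ x in qball d c r ∩ qball d x0 T, lam⁻¹ * ω x ^ (q x).toReal ∂μ :=
              lintegral_mono fun x => hpt x
          _ = lam⁻¹ * ∫⁻ x in qball d c r ∩ qball d x0 T, ω x ^ (q x).toReal ∂μ :=
              lintegral_const_mul' _ _ (ENNReal.inv_ne_top.mpr hlam0)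
          _ ≤ lam⁻¹ * ∫⁻ x in qball d x0 T, ω x ^ (q x).toReal ∂μ := by
              gcongr
              exact Set.inter_subset_right
          _ ≤ lam⁻¹ * (CW * lam ^ ((1:ℝ)/2)) := by
              gcongr
              exact hWgrow lam hlam1 hlamT
          _ = CW * (lam ^ ((1:ℝ)/2) * lam⁻¹) := by ring
          _ = CW * (lam ^ ((1:ℝ)/2))⁻¹ := by rw [hss]
          _ ≤ CW * (2*CW)⁻¹ := mul_le_mul_right (ENNReal.inv_le_inv.mpr hlam_half) _
          _ = 2⁻¹ := by
              rw [ENNReal.mul_inv (Or.inl (by norm_num)) (Or.inl (by norm_num))]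
              calc CW * ((2:ℝ≥0∞)⁻¹ * CW⁻¹) = 2⁻¹ * (CW * CW⁻¹) := by ring
                _ = 2⁻¹ := by rw [ENNReal.mul_inv_cancel hCW0 hCWT, mul_one]
      have hfarb : (∫⁻ x in qball d c r \ qball d x0 T, (ω x / lam) ^ (q x).toReal ∂μ)
          ≤ 2⁻¹ := by
        have hconstT : ((lam ^ qinf)⁻¹ * Ecst : ℝ≥0∞) ≠ ∞ :=
          ENNReal.mul_ne_top
            (ENNReal.inv_ne_top.mpr (S9.rpow_pos_fin hlam0 hlamT qinf).1) hET
        have hpt : ∀ x ∈ qball d c r \ qball d x0 T,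
            (ω x / lam) ^ (q x).toReal ≤ (lam ^ qinf)⁻¹ * Ecst * ω x ^ (q x).toReal := by
          intro x hx
          have hxfar : ¬ (d x0 x < T) := hx.2
          have hEb := hfar lam hlam1 hlamT x hxfar
          have habs := hCinf x
          have ht : qinf - Cinf / Real.log (Real.exp 1 + d x x0) ≤ (q x).toReal := by
            have h2 := abs_le.mp habs
            linarith [h2.1]
          calc (ω x / lam) ^ (q x).toReal
              = ω x ^ (q x).toReal * (lam ^ (q x).toReal)⁻¹ := by
                rw [ENNReal.div_rpow_of_nonneg _ _ ENNReal.toReal_nonneg, div_eq_mul_inv]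
            _ ≤ ω x ^ (q x).toReal
                  * (lam ^ (qinf - Cinf / Real.log (Real.exp 1 + d x x0)))⁻¹ :=
                mul_le_mul_right (ENNReal.inv_le_inv.mpr
                  (ENNReal.rpow_le_rpow_of_exponent_le hlam1 ht)) _
            _ = ω x ^ (q x).toReal
                  * (lam ^ (-qinf) * lam ^ (Cinf / Real.log (Real.exp 1 + d x x0))) := by
                rw [← ENNReal.rpow_neg,
                  show -(qinf - Cinf / Real.log (Real.exp 1 + d x x0))
                    = -qinf + Cinf / Real.log (Real.exp 1 + d x x0) by ring,
                  ENNReal.rpow_add _ _ hlam0 hlamT]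
            _ ≤ ω x ^ (q x).toReal * (lam ^ (-qinf) * Ecst) :=
                mul_le_mul_right (mul_le_mul_right hEb _) _
            _ = (lam ^ qinf)⁻¹ * Ecst * ω x ^ (q x).toReal := by
                rw [ENNReal.rpow_neg]
                ring
        calc (∫⁻ x in qball d c r \ qball d x0 T, (ω x / lam) ^ (q x).toReal ∂μ)
            ≤ ∫⁻ x in qball d c r \ qball d x0 T,
                (lam ^ qinf)⁻¹ * Ecst * ω x ^ (q x).toReal ∂μ :=
              S9.setLIntegral_mono_on' ((hball c r).diff (hball x0 T)) hpt
          _ = (lam ^ qinf)⁻¹ * Ecst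
                * ∫⁻ x in qball d c r \ qball d x0 T, ω x ^ (q x).toReal ∂μ :=
              lintegral_const_mul' _ _ hconstT
          _ ≤ (lam ^ qinf)⁻¹ * Ecst * W := by
              gcongr
              exact lintegral_mono_set Set.diff_subset
          _ = Ecst * ((A*W)⁻¹ * W) := by rw [hlamq]; ring
          _ = Ecst * A⁻¹ := by
              rw [ENNReal.mul_inv (Or.inl hA0) (Or.inl hAT), mul_assoc,
                ENNReal.inv_mul_cancel hW0 hWT, mul_one]
          _ ≤ Ecst * (2*Ecst)⁻¹ := by
              refine mul_le_mul_right (ENNReal.inv_le_inv.mpr ?_) _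
              rw [hAdef]
              exact le_self_add
          _ = 2⁻¹ := by
              rw [ENNReal.mul_inv (Or.inl (by norm_num)) (Or.inl (by norm_num))]
              calc Ecst * ((2:ℝ≥0∞)⁻¹ * Ecst⁻¹) = 2⁻¹ * (Ecst * Ecst⁻¹) := by ring
                _ = 2⁻¹ := by rw [ENNReal.mul_inv_cancel hE0 hET, mul_one]
      have hmodle : (∫⁻ x in qball d c r, (ω x / lam) ^ (q x).toReal ∂μ) ≤ 1 := by
        rw [hsplit c r T]
        calc _ ≤ 2⁻¹ + 2⁻¹ := add_le_add hnear hfarb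
          _ = 1 := ENNReal.inv_two_add_inv_two
      have hupper : N ≤ A ^ (1/qinf) * W ^ (1/qinf) := by
        have h10 := S9.norm_le_of_mod μ q ω (hball c r) hqT htq0
          (lt_of_lt_of_le one_pos hlam1) hmodle
        calc N ≤ lam := h10
          _ = A ^ (1/qinf) * W ^ (1/qinf) := by
              rw [hlamdef, ENNReal.mul_rpow_of_nonneg _ _ h1q0]
      have hNT : N ≠ ∞ := by
        intro hT
        rw [hT] at hupper
        exact (ENNReal.mul_ne_top (ENNReal.rpow_ne_top_of_nonneg h1q0 hAT)
          (ENNReal.rpow_ne_top_of_nonneg h1q0 hWT)) (top_le_iff.mp hupper)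
      set lam2 := 2 * N with hlam2def
      have hN0 : N ≠ 0 := (lt_of_lt_of_le one_pos hN1).ne'
      have hlam21 : (1:ℝ≥0∞) ≤ lam2 := by
        calc (1:ℝ≥0∞) ≤ N := hN1
          _ ≤ 2 * N := le_mul_of_one_le_left zero_le (by norm_num)
      have hlam2T : lam2 ≠ ∞ := ENNReal.mul_ne_top (by norm_num) hNT
      have hlam20 : lam2 ≠ 0 := (lt_of_lt_of_le one_pos hlam21).ne'
      have hNlt : N < lam2 := by
        rw [hlam2def, two_mul]
        exact ENNReal.lt_add_right hNT hN0
      have hmod2 := S9.mod_le_one_of_norm_lt μ q ω (hball c r) hqT htq0 hNlt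
      set T2 := Real.exp (Real.log lam2.toReal / (2*D)) with hT2def
      have hnear2 : (∫⁻ x in qball d c r ∩ qball d x0 T2, ω x ^ (q x).toReal ∂μ)
          ≤ CW * lam2 ^ qinf := by
        calc (∫⁻ x in qball d c r ∩ qball d x0 T2, ω x ^ (q x).toReal ∂μ)
            ≤ ∫⁻ x in qball d x0 T2, ω x ^ (q x).toReal ∂μ :=
              lintegral_mono_set Set.inter_subset_right
          _ ≤ CW * lam2 ^ ((1:ℝ)/2) := hWgrow lam2 hlam21 hlam2T
          _ ≤ CW * lam2 ^ qinf :=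
              mul_le_mul_right
                (ENNReal.rpow_le_rpow_of_exponent_le hlam21 (by linarith)) _
      have hfar2 : (∫⁻ x in qball d c r \ qball d x0 T2, ω x ^ (q x).toReal ∂μ)
          ≤ Ecst * lam2 ^ qinf := by
        have hconstT : (lam2 ^ qinf * Ecst : ℝ≥0∞) ≠ ∞ :=
          ENNReal.mul_ne_top (ENNReal.rpow_ne_top_of_nonneg (by linarith) hlam2T) hET
        have hpt : ∀ x ∈ qball d c r \ qball d x0 T2,
            ω x ^ (q x).toReal ≤ lam2 ^ qinf * Ecst * (ω x / lam2) ^ (q x).toReal := by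
          intro x hx
          have hxfar : ¬ (d x0 x < T2) := hx.2
          have hEb := hfar lam2 hlam21 hlam2T x hxfar
          have habs := hCinf x
          have ht : (q x).toReal ≤ qinf + Cinf / Real.log (Real.exp 1 + d x x0) := by
            have h2 := abs_le.mp habs
            linarith [h2.2]
          calc ω x ^ (q x).toReal
              = (ω x / lam2 * lam2) ^ (q x).toReal := by
                rw [ENNReal.div_mul_cancel hlam20 hlam2T]
            _ = (ω x / lam2) ^ (q x).toReal * lam2 ^ (q x).toReal :=
                ENNReal.mul_rpow_of_nonneg _ _ ENNReal.toReal_nonneg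
            _ ≤ (ω x / lam2) ^ (q x).toReal
                  * lam2 ^ (qinf + Cinf / Real.log (Real.exp 1 + d x x0)) :=
                mul_le_mul_right (ENNReal.rpow_le_rpow_of_exponent_le hlam21 ht) _
            _ = (ω x / lam2) ^ (q x).toReal
                  * (lam2 ^ qinf * lam2 ^ (Cinf / Real.log (Real.exp 1 + d x x0))) := by
                rw [ENNReal.rpow_add _ _ hlam20 hlam2T]
            _ ≤ (ω x / lam2) ^ (q x).toReal * (lam2 ^ qinf * Ecst) :=
                mul_le_mul_right (mul_le_mul_right hEb _) _
            _ = lam2 ^ qinf * Ecst * (ω x / lam2) ^ (q x).toReal := by ring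
        calc (∫⁻ x in qball d c r \ qball d x0 T2, ω x ^ (q x).toReal ∂μ)
            ≤ ∫⁻ x in qball d c r \ qball d x0 T2,
                lam2 ^ qinf * Ecst * (ω x / lam2) ^ (q x).toReal ∂μ :=
              S9.setLIntegral_mono_on' ((hball c r).diff (hball x0 T2)) hpt
          _ = lam2 ^ qinf * Ecst
                * ∫⁻ x in qball d c r \ qball d x0 T2, (ω x / lam2) ^ (q x).toReal ∂μ :=
              lintegral_const_mul' _ _ hconstT
          _ ≤ lam2 ^ qinf * Ecst * 1 := by
              gcongr
              exact le_trans (lintegral_mono_set Set.diff_subset) hmod2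
          _ = Ecst * lam2 ^ qinf := by ring
      have hWb : W ≤ (CW + Ecst) * (2:ℝ≥0∞)^qinf * N ^ qinf := by
        calc W = (∫⁻ x in qball d c r ∩ qball d x0 T2, ω x ^ (q x).toReal ∂μ)
              + ∫⁻ x in qball d c r \ qball d x0 T2, ω x ^ (q x).toReal ∂μ :=
              hsplit c r T2 _
          _ ≤ CW * lam2 ^ qinf + Ecst * lam2 ^ qinf := add_le_add hnear2 hfar2
          _ = (CW + Ecst) * lam2 ^ qinf := by ring
          _ = (CW + Ecst) * ((2:ℝ≥0∞)^qinf * N ^ qinf) := by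
              rw [hlam2def, ENNReal.mul_rpow_of_nonneg _ _ (by linarith : (0:ℝ) ≤ qinf)]
          _ = (CW + Ecst) * (2:ℝ≥0∞)^qinf * N ^ qinf := by ring
      have hlower : Cfin⁻¹ * W ^ (1/qinf) ≤ N := by
        have h11 : W ^ (1/qinf) ≤ Cfin * N := by
          calc W ^ (1/qinf) ≤ ((CW + Ecst) * (2:ℝ≥0∞)^qinf * N ^ qinf) ^ (1/qinf) :=
                ENNReal.rpow_le_rpow hWb h1q0
            _ = Cfin * (N ^ qinf) ^ (1/qinf) := by
                rw [hCfindef, ENNReal.mul_rpow_of_nonneg _ _ h1q0]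
            _ = Cfin * N := by
                rw [← ENNReal.rpow_mul, mul_one_div_cancel hqinf0, ENNReal.rpow_one]
        calc Cfin⁻¹ * W ^ (1/qinf) ≤ Cfin⁻¹ * (Cfin * N) := by gcongr
          _ = (Cfin⁻¹ * Cfin) * N := by ring
          _ = N := by rw [ENNReal.inv_mul_cancel hCfin0 hCfinT, one_mul]
      exact ⟨hlower, hupper⟩





end
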